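/- Define Δ(ε) = 1 − 4β²ε² − 4i(β/v)ε, let √Δ(ε) be its principal complex square root, and let λ₂(ε) = (−1 − 2αε − √Δ(ε))/(2ε) be the fast eigenvalue. Then the fast amplification factor of the inner forward Euler integrator with step δt = ε, namely τ₂(ε) = 1 + ε·λ₂(ε) = (1 − 2αε − √Δ(ε))/2, satisfies τ₂(ε) = (−α + i(β/v))·ε + O(ε²) as ε → 0⁺; in particular τ₂(ε) → 0 as ε → 0⁺, so the quickly damped modes of the inner forward Euler scheme with δt = ε are centered around 0. -/

import Mathlib

open Complex Filter Asymptotics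

noncomputable def Complex.abs : AbsoluteValue ℂ ℝ := NormedField.toAbsoluteValue ℂ

theorem Complex.norm_eq_abs (z : ℂ) : ‖z‖ = Complex.abs z := rfl

@[simp] theorem Complex.abs_ofReal (r : ℝ) : Complex.abs (r : ℂ) = |r| := by
  change ‖(r : ℂ)‖ = |r|
  simp

@[simp] theorem Complex.abs_I : Complex.abs Complex.I = 1 := by
  change ‖Complex.I‖ = 1
  simp

@[simp] theorem Complex.abs_two : Complex.abs 2 = 2 := by
  change ‖(2 : ℂ)‖ = 2
  simp

/-- The fast amplification factor of the inner forward Euler integrator with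
step `δt = ε`, namely `τ₂(ε) = 1 + ελ₂(ε) = (1 − 2αε − √Δ(ε))/2`, satisfies
`τ₂(ε) = (−α + iβ/v)ε + O(ε²)` as `ε → 0⁺`; in particular `τ₂(ε) → 0`, so the
quickly damped modes are centered around `0`. -/
theorem fast_amplification_factor_centered (α β v : ℝ) (hv : v ≠ 0) :
    ((fun ε : ℝ =>
        ((1 - 2 * (α : ℂ) * (ε : ℂ)
            - (1 - 4 * (β : ℂ) ^ 2 * (ε : ℂ) ^ 2
                - 4 * Complex.I * ((β : ℂ) / (v : ℂ)) * (ε : ℂ)) ^ ((1 : ℂ) / 2)) / 2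
          - (-(α : ℂ) + Complex.I * ((β : ℂ) / (v : ℂ))) * (ε : ℂ)))
      =O[nhdsWithin 0 (Set.Ioi 0)] (fun ε : ℝ => ε ^ 2)) ∧
    Filter.Tendsto
      (fun ε : ℝ =>
        (1 - 2 * (α : ℂ) * (ε : ℂ)
            - (1 - 4 * (β : ℂ) ^ 2 * (ε : ℂ) ^ 2
                - 4 * Complex.I * ((β : ℂ) / (v : ℂ)) * (ε : ℂ)) ^ ((1 : ℂ) / 2)) / 2)
      (nhdsWithin 0 (Set.Ioi 0)) (nhds 0) := by
  set c : ℂ := -(α : ℂ) + Complex.I * ((β : ℂ) / (v : ℂ)) with hc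
  set K : ℝ := 4 * β ^ 2 + 4 * |β / v| with hK
  have hKnn : 0 ≤ K := by positivity
  -- the O(ε²) bound
  have hO : (fun ε : ℝ =>
        ((1 - 2 * (α : ℂ) * (ε : ℂ)
            - (1 - 4 * (β : ℂ) ^ 2 * (ε : ℂ) ^ 2
                - 4 * Complex.I * ((β : ℂ) / (v : ℂ)) * (ε : ℂ)) ^ ((1 : ℂ) / 2)) / 2
          - c * (ε : ℂ)))
      =O[nhdsWithin 0 (Set.Ioi 0)] (fun ε : ℝ => ε ^ 2) := by
    rw [isBigO_iff]
    refine ⟨(4 * β ^ 2 + 2 * |β / v| * K) / 2, ?_⟩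
    filter_upwards [Ioo_mem_nhdsGT_of_mem (Set.left_mem_Ico.2 one_pos)] with ε hε
    obtain ⟨hε0, hε1⟩ := hε
    set Δ : ℂ := 1 - 4 * (β : ℂ) ^ 2 * (ε : ℂ) ^ 2
                - 4 * Complex.I * ((β : ℂ) / (v : ℂ)) * (ε : ℂ) with hΔ
    set S : ℂ := Δ ^ ((1 : ℂ) / 2) with hS
    have hsq : S ^ 2 = Δ := by
      rw [hS, show ((1 : ℂ) / 2) = (((2 : ℕ) : ℂ))⁻¹ by norm_num]
      exact Complex.cpow_nat_inv_pow Δ two_ne_zero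
    have hre : 0 ≤ S.re := by
      rw [hS, show ((1 : ℂ) / 2) = (2⁻¹ : ℂ) by norm_num, Complex.cpow_inv_two_re]
      exact Real.sqrt_nonneg _
    have h1S : (1 : ℝ) ≤ Complex.abs (1 + S) := by
      calc (1 : ℝ) ≤ (1 + S).re := by simp [Complex.add_re]; linarith
        _ ≤ Complex.abs (1 + S) := Complex.re_le_norm _
    have h1Sne : (1 : ℂ) + S ≠ 0 := by
      intro h
      rw [h] at h1S
      simp at h1S
      linarith
    have e1 : Complex.abs (4 * (β : ℂ) ^ 2 * (ε : ℂ) ^ 2) = 4 * β ^ 2 * ε ^ 2 := by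
      rw [show (4 * (β : ℂ) ^ 2 * (ε : ℂ) ^ 2) = ((4 * β ^ 2 * ε ^ 2 : ℝ) : ℂ) by push_cast; ring,
        Complex.abs_ofReal, _root_.abs_of_nonneg (by positivity)]
    have e2 : Complex.abs (4 * Complex.I * ((β : ℂ) / (v : ℂ)) * (ε : ℂ)) = 4 * |β / v| * ε := by
      rw [show (4 * Complex.I * ((β : ℂ) / (v : ℂ)) * (ε : ℂ))
            = ((4 * (β / v) * ε : ℝ) : ℂ) * Complex.I by push_cast; ring,
        map_mul, Complex.abs_I, mul_one, Complex.abs_ofReal, abs_mul, abs_mul,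
        _root_.abs_of_pos hε0]
      norm_num
    have e3 : Complex.abs (2 * Complex.I * ((β : ℂ) / (v : ℂ)) * (ε : ℂ)) = 2 * |β / v| * ε := by
      rw [show (2 * Complex.I * ((β : ℂ) / (v : ℂ)) * (ε : ℂ))
            = ((2 * (β / v) * ε : ℝ) : ℂ) * Complex.I by push_cast; ring,
        map_mul, Complex.abs_I, mul_one, Complex.abs_ofReal, abs_mul, abs_mul,
        _root_.abs_of_pos hε0]
      norm_num
    -- bound on |w|
    have hwabs : Complex.abs (4 * (β : ℂ) ^ 2 * (ε : ℂ) ^ 2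
        + 4 * Complex.I * ((β : ℂ) / (v : ℂ)) * (ε : ℂ)) ≤ K * ε := by
      calc Complex.abs (4 * (β : ℂ) ^ 2 * (ε : ℂ) ^ 2
            + 4 * Complex.I * ((β : ℂ) / (v : ℂ)) * (ε : ℂ))
          ≤ Complex.abs (4 * (β : ℂ) ^ 2 * (ε : ℂ) ^ 2)
            + Complex.abs (4 * Complex.I * ((β : ℂ) / (v : ℂ)) * (ε : ℂ)) :=
            Complex.abs.add_le _ _
        _ = 4 * β ^ 2 * ε ^ 2 + 4 * |β / v| * ε := by rw [e1, e2]
        _ ≤ 4 * β ^ 2 * ε + 4 * |β / v| * ε := by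
            have : ε ^ 2 ≤ ε := by nlinarith
            nlinarith [sq_nonneg β]
        _ = K * ε := by rw [hK]; ring
    have h1mS : (1 - S) * (1 + S) = 4 * (β : ℂ) ^ 2 * (ε : ℂ) ^ 2
        + 4 * Complex.I * ((β : ℂ) / (v : ℂ)) * (ε : ℂ) := by
      rw [hΔ] at hsq; linear_combination -hsq
    have h1mSabs : Complex.abs (1 - S) ≤ K * ε := by
      have h2 : Complex.abs (1 - S) * 1 ≤ Complex.abs (1 - S) * Complex.abs (1 + S) :=
        mul_le_mul_of_nonneg_left h1S (Complex.abs.nonneg _)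
      rw [← map_mul, h1mS] at h2
      calc Complex.abs (1 - S) = Complex.abs (1 - S) * 1 := (mul_one _).symm
        _ ≤ _ := h2
        _ ≤ K * ε := hwabs
    -- the main identity
    have hid : (1 - 2 * (α : ℂ) * (ε : ℂ) - S) / 2 - c * (ε : ℂ)
        = (4 * (β : ℂ) ^ 2 * (ε : ℂ) ^ 2
            + 2 * Complex.I * ((β : ℂ) / (v : ℂ)) * (ε : ℂ) * (1 - S)) / (2 * (1 + S)) := by
      rw [eq_div_iff (mul_ne_zero two_ne_zero h1Sne)]
      rw [hΔ] at hsq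
      rw [hc]
      linear_combination -hsq
    rw [hid]
    have hnum : Complex.abs (4 * (β : ℂ) ^ 2 * (ε : ℂ) ^ 2
        + 2 * Complex.I * ((β : ℂ) / (v : ℂ)) * (ε : ℂ) * (1 - S))
        ≤ (4 * β ^ 2 + 2 * |β / v| * K) * ε ^ 2 := by
      calc Complex.abs (4 * (β : ℂ) ^ 2 * (ε : ℂ) ^ 2
            + 2 * Complex.I * ((β : ℂ) / (v : ℂ)) * (ε : ℂ) * (1 - S))
          ≤ Complex.abs (4 * (β : ℂ) ^ 2 * (ε : ℂ) ^ 2)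
            + Complex.abs (2 * Complex.I * ((β : ℂ) / (v : ℂ)) * (ε : ℂ) * (1 - S)) :=
            Complex.abs.add_le _ _
        _ = 4 * β ^ 2 * ε ^ 2 + 2 * |β / v| * ε * Complex.abs (1 - S) := by
            rw [map_mul Complex.abs (2 * Complex.I * ((β : ℂ) / (v : ℂ)) * (ε : ℂ)) (1 - S),
              e1, e3]
        _ ≤ 4 * β ^ 2 * ε ^ 2 + 2 * |β / v| * ε * (K * ε) := by
            have h0 : 0 ≤ 2 * |β / v| * ε := by positivity
            have := mul_le_mul_of_nonneg_left h1mSabs h0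
            linarith
        _ = (4 * β ^ 2 + 2 * |β / v| * K) * ε ^ 2 := by ring
    have hden : (2 : ℝ) ≤ Complex.abs (2 * (1 + S)) := by
      rw [map_mul]
      simpa using mul_le_mul_of_nonneg_left h1S (by norm_num : (0:ℝ) ≤ Complex.abs 2)
    rw [show ‖(4 * (β : ℂ) ^ 2 * (ε : ℂ) ^ 2
            + 2 * Complex.I * ((β : ℂ) / (v : ℂ)) * (ε : ℂ) * (1 - S)) / (2 * (1 + S))‖
        = Complex.abs (4 * (β : ℂ) ^ 2 * (ε : ℂ) ^ 2
            + 2 * Complex.I * ((β : ℂ) / (v : ℂ)) * (ε : ℂ) * (1 - S))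
          / Complex.abs (2 * (1 + S)) from by simp [Complex.norm_eq_abs, map_div₀]]
    rw [div_le_iff₀ (by linarith)]
    have hnorm : ‖ε ^ 2‖ = ε ^ 2 := by
      rw [Real.norm_eq_abs, abs_of_pos (by positivity)]
    rw [hnorm]
    calc Complex.abs (4 * (β : ℂ) ^ 2 * (ε : ℂ) ^ 2
            + 2 * Complex.I * ((β : ℂ) / (v : ℂ)) * (ε : ℂ) * (1 - S))
        ≤ (4 * β ^ 2 + 2 * |β / v| * K) * ε ^ 2 := hnum
      _ = (4 * β ^ 2 + 2 * |β / v| * K) / 2 * ε ^ 2 * 2 := by ring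
      _ ≤ (4 * β ^ 2 + 2 * |β / v| * K) / 2 * ε ^ 2 * Complex.abs (2 * (1 + S)) := by
          have h0 : 0 ≤ (4 * β ^ 2 + 2 * |β / v| * K) / 2 * ε ^ 2 := by positivity
          exact mul_le_mul_of_nonneg_left hden h0
  refine ⟨hO, ?_⟩
  -- tendsto part
  have h2 : Tendsto (fun ε : ℝ => ε ^ 2) (nhdsWithin 0 (Set.Ioi 0)) (nhds 0) := by
    have := (continuous_pow 2).tendsto (0 : ℝ)
    simpa using this.mono_left nhdsWithin_le_nhds
  have hT := hO.trans_tendsto h2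
  have hcε : Tendsto (fun ε : ℝ => c * (ε : ℂ)) (nhdsWithin 0 (Set.Ioi 0)) (nhds 0) := by
    have : Tendsto (fun ε : ℝ => c * (ε : ℂ)) (nhds 0) (nhds (c * ((0:ℝ):ℂ))) :=
      (continuous_const.mul (Complex.continuous_ofReal)).tendsto 0
    simpa using this.mono_left nhdsWithin_le_nhds
  have := hT.add hcε
  simpa using this
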